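/- Let $n \geq 1$ and let $\omega_1, \ldots, \omega_n$ be a basis of $\mathbb{F}_{2^n}$ over $\mathbb{F}_2$, and for each $1 \le i \le n$ let $f_i \in \mathbb{F}_{2^n}[x]$ be a polynomial such that $f_i(x)$ equals the $i$-th coordinate of $x$ in the basis (as the field element $0$ or $1$) for all $x \in \mathbb{F}_{2^n}$. Let a 3-CNF over $n$ Boolean variables be given as a list of $m \le n$ clauses, where each clause $k$ consists of three pairs $(i_{k,1}, \varepsilon_{k,1}), (i_{k,2}, \varepsilon_{k,2}), (i_{k,3}, \varepsilon_{k,3})$ with $i_{k,j} \in \{1,\ldots,n\}$ a variable index and $\varepsilon_{k,j} \in \mathbb{F}_2$ a sign; an assignment $b : \{1,\ldots,n\} \to \mathbb{F}_2$ satisfies clause $k$ iff $b(i_{k,j}) \ne \varepsilon_{k,j}$ for some $j \in \{1,2,3\}$. For each clause $k$ define the polynomial $P_k = \prod_{j=1}^{3} (f_{i_{k,j}} + \varepsilon_{k,j})$ (where $\varepsilon_{k,j}$ is interpreted as the constant $0$ or $1$ in $\mathbb{F}_{2^n}$), and define $Q = \sum_{k=1}^{m} \omega_k \cdot P_k$.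 Then the number of roots of $Q$ in $\mathbb{F}_{2^n}$ equals the number of assignments $b : \{1,\ldots,n\} \to \mathbb{F}_2$ satisfying all $m$ clauses. -/

import Mathlib

/-- Reduction of #3SAT to counting roots of a single polynomial over `𝔽_{2^n}`.
Given a basis `ω` of `𝔽_{2^n}` over `𝔽_2`, coordinate polynomials `f i`, and a 3-CNF
with `m ≤ n` clauses described by variable indices `idx k j` and signs `sign k j`,
the polynomial `Q = ∑ k, ω k * ∏ j, (f (idx k j) + sign k j)` has exactly as many
roots in `𝔽_{2^n}` as the 3-CNF has satisfying assignments. -/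
theorem card_roots_eq_card_satisfying_assignments (n m : ℕ) (hn : 1 ≤ n) (hm : m ≤ n)
    (ω : Module.Basis (Fin n) (ZMod 2) (GaloisField 2 n))
    (f : Fin n → Polynomial (GaloisField 2 n))
    (hf : ∀ (i : Fin n) (x : GaloisField 2 n),
      (ω.repr x i = 0 → Polynomial.eval x (f i) = 0) ∧
      (ω.repr x i = 1 → Polynomial.eval x (f i) = 1))
    (idx : Fin m → Fin 3 → Fin n)
    (sign : Fin m → Fin 3 → ZMod 2)
    (P : Fin m → Polynomial (GaloisField 2 n))
    (hP : ∀ k : Fin m, P k = ∏ j : Fin 3,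
      (f (idx k j) + Polynomial.C (algebraMap (ZMod 2) (GaloisField 2 n) (sign k j))))
    (Q : Polynomial (GaloisField 2 n))
    (hQ : Q = ∑ k : Fin m, Polynomial.C (ω (Fin.castLE hm k)) * P k) :
    Nat.card {x : GaloisField 2 n // Polynomial.eval x Q = 0}
      = Nat.card {b : Fin n → ZMod 2 // ∀ k : Fin m, ∃ j : Fin 3, b (idx k j) ≠ sign k j} := by
  have hall : ∀ a : ZMod 2, a = 0 ∨ a = 1 := by decide
  have h2 : ∀ a c : ZMod 2, a + c = 0 ↔ a = c := by decide
  have h4 : ∀ a c : ZMod 2, (a = c ↔ (a + 1) ≠ c) := by decide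
  have hfx : ∀ (i : Fin n) (x : GaloisField 2 n),
      Polynomial.eval x (f i) = algebraMap (ZMod 2) (GaloisField 2 n) (ω.repr x i) := by
    intro i x
    rcases hall (ω.repr x i) with h | h
    · rw [h, (hf i x).1 h]; simp
    · rw [h, (hf i x).2 h]; simp
  have hQeval : ∀ x, Polynomial.eval x Q
      = ∑ k : Fin m, (∏ j : Fin 3, (ω.repr x (idx k j) + sign k j)) • ω (Fin.castLE hm k) := by
    intro x
    rw [hQ, Polynomial.eval_finset_sum]
    refine Finset.sum_congr rfl fun k _ => ?_
    rw [hP, Polynomial.eval_mul, Polynomial.eval_C, Polynomial.eval_prod,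
      Algebra.smul_def, mul_comm]
    congr 1
    rw [map_prod]
    refine Finset.prod_congr rfl fun j _ => ?_
    rw [Polynomial.eval_add, Polynomial.eval_C, hfx, map_add]
  have li : LinearIndependent (ZMod 2) (ω ∘ Fin.castLE hm) :=
    ω.linearIndependent.comp _ (Fin.castLE_injective hm)
  have hroot : ∀ x, Polynomial.eval x Q = 0 ↔
      ∀ k : Fin m, ∃ j : Fin 3, ω.repr x (idx k j) = sign k j := by
    intro x
    rw [hQeval]
    constructor
    · intro h k
      have hz := Fintype.linearIndependent_iff.mp li
        (fun k => ∏ j : Fin 3, (ω.repr x (idx k j) + sign k j)) h k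
      rcases Finset.prod_eq_zero_iff.mp hz with ⟨j, -, hj⟩
      exact ⟨j, (h2 _ _).mp hj⟩
    · intro h
      refine Finset.sum_eq_zero fun k _ => ?_
      obtain ⟨j, hj⟩ := h k
      rw [Finset.prod_eq_zero (Finset.mem_univ j) ((h2 _ _).mpr hj), zero_smul]
  have e : {x : GaloisField 2 n // Polynomial.eval x Q = 0} ≃
      {b : Fin n → ZMod 2 // ∀ k : Fin m, ∃ j : Fin 3, b (idx k j) ≠ sign k j} := by
    refine (ω.equivFun.toEquiv.trans (Equiv.addRight (1 : Fin n → ZMod 2))).subtypeEquiv ?_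
    intro x
    simp only [Equiv.trans_apply, Equiv.coe_addRight, LinearEquiv.coe_toEquiv,
      Module.Basis.equivFun_apply, Pi.add_apply, Pi.one_apply]
    rw [hroot]
    constructor <;> intro h k <;> obtain ⟨j, hj⟩ := h k <;>
      exact ⟨j, by first | exact (h4 _ _).mp hj | exact (h4 _ _).mpr hj⟩
  exact Nat.card_congr e
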